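/- If the moment generating functions of two real random variables A and B exist and coincide on an open interval containing 0, then A and B are equal in distribution. -/

import Mathlib

open MeasureTheory ProbabilityTheory Real Set Filter Metric
open scoped Topology FourierTransform RealInnerProductSpace

lemma exp_mul_le_add {a b t : ℝ} (x : ℝ) (hat : a ≤ t) (htb : t ≤ b) :
    Real.exp (t * x) ≤ Real.exp (a * x) + Real.exp (b * x) := by
  rcases le_or_gt x 0 with hx | hx
  · have h : t * x ≤ a * x := mul_le_mul_of_nonpos_right hat hx
    calc Real.exp (t * x) ≤ Real.exp (a * x) := Real.exp_le_exp.mpr h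
    _ ≤ _ := le_add_of_nonneg_right (Real.exp_pos _).le
  · have h : t * x ≤ b * x := mul_le_mul_of_nonneg_right htb hx.le
    calc Real.exp (t * x) ≤ Real.exp (b * x) := Real.exp_le_exp.mpr h
    _ ≤ _ := le_add_of_nonneg_left (Real.exp_pos _).le

lemma abs_mul_exp_le {ε t : ℝ} (x : ℝ) (hε : 0 < ε) :
    |x| * Real.exp (t * x) ≤ ε⁻¹ * (Real.exp ((t + ε) * x) + Real.exp ((t - ε) * x)) := by
  have h1 : ε * |x| ≤ Real.exp (ε * x) + Real.exp (-(ε * x)) := by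
    rcases le_or_gt 0 x with hx | hx
    · have : ε * |x| ≤ Real.exp (ε * x) := by
        rw [abs_of_nonneg hx]
        calc ε * x ≤ ε * x + 1 := by linarith
        _ ≤ _ := Real.add_one_le_exp _
      linarith [Real.exp_pos (-(ε * x))]
    · have : ε * |x| ≤ Real.exp (-(ε * x)) := by
        rw [abs_of_neg hx]
        calc ε * -x ≤ ε * -x + 1 := by linarith
        _ ≤ _ := by simpa [neg_mul, mul_neg] using Real.add_one_le_exp (-(ε * x))
      linarith [Real.exp_pos (ε * x)]
  have h2 : |x| ≤ ε⁻¹ * (Real.exp (ε * x) + Real.exp (-(ε * x))) := by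
    rw [le_inv_mul_iff₀ hε]
    exact h1
  have h3 := mul_le_mul_of_nonneg_right h2 (Real.exp_pos (t * x)).le
  calc |x| * Real.exp (t * x)
      ≤ ε⁻¹ * (Real.exp (ε * x) + Real.exp (-(ε * x))) * Real.exp (t * x) := h3
    _ = ε⁻¹ * (Real.exp ((t + ε) * x) + Real.exp ((t - ε) * x)) := by
        rw [mul_assoc, add_mul, ← Real.exp_add, ← Real.exp_add]; ring_nf

lemma differentiableAt_integral_cexp (ν : Measure ℝ) [IsFiniteMeasure ν] {δ : ℝ}
    (hI : ∀ t ∈ Set.Ioo (-δ) δ, Integrable (fun x => Real.exp (t * x)) ν)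
    {z₀ : ℂ} (hz : z₀.re ∈ Set.Ioo (-δ) δ) :
    DifferentiableAt ℂ (fun z => ∫ x, Complex.exp (z * x) ∂ν) z₀ := by
  set t₀ : ℝ := z₀.re with ht₀
  have habs : |t₀| < δ := abs_lt.mpr ⟨hz.1, hz.2⟩
  set ε : ℝ := (δ - |t₀|) / 4 with hεdef
  have hε : 0 < ε := by rw [hεdef]; linarith
  have hmem : ∀ s : ℝ, |s - t₀| ≤ 2 * ε → s ∈ Set.Ioo (-δ) δ := by
    intro s hs
    have : |s| ≤ |t₀| + 2 * ε := by
      calc |s| = |t₀ + (s - t₀)| := by ring_nf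
      _ ≤ |t₀| + |s - t₀| := abs_add_le _ _
      _ ≤ |t₀| + 2 * ε := by linarith
    have hlt : |s| < δ := by
      have : |t₀| + 2 * ε < δ := by rw [hεdef]; linarith
      linarith
    exact ⟨(abs_lt.mp hlt).1, (abs_lt.mp hlt).2⟩
  have hIa : Integrable (fun x => Real.exp ((t₀ - 2 * ε) * x)) ν :=
    hI _ (hmem _ (by rw [abs_of_nonpos] <;> [skip; linarith] ; linarith))
  have hIb : Integrable (fun x => Real.exp ((t₀ + 2 * ε) * x)) ν :=
    hI _ (hmem _ (by rw [abs_of_nonneg] <;> linarith))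
  set bound : ℝ → ℝ := fun x =>
    ε⁻¹ * (2 * (Real.exp ((t₀ - 2 * ε) * x) + Real.exp ((t₀ + 2 * ε) * x))) with hbdef
  have key := hasDerivAt_integral_of_dominated_loc_of_deriv_le (μ := ν)
      (F := fun (z : ℂ) (x : ℝ) => Complex.exp (z * x))
      (F' := fun (z : ℂ) (x : ℝ) => Complex.exp (z * x) * x)
      (x₀ := z₀) (bound := bound) (ball_mem_nhds z₀ hε)
      ?_ ?_ ?_ ?_ ?_ ?_
  · exact key.2.differentiableAt
  · filter_upwards with z
    exact (Continuous.cexp (continuous_const.mul Complex.continuous_ofReal)).aestronglyMeasurable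
  · have := hI t₀ hz
    refine this.mono' ((Continuous.cexp
      (continuous_const.mul Complex.continuous_ofReal)).aestronglyMeasurable) ?_
    filter_upwards with x
    rw [Complex.norm_exp]
    simp [Complex.mul_re, ht₀]
  · exact ((Continuous.cexp (continuous_const.mul Complex.continuous_ofReal)).mul
      Complex.continuous_ofReal).aestronglyMeasurable
  · filter_upwards with x z hzball
    have hre : |z.re - t₀| < ε := by
      have h1 : |(z - z₀).re| ≤ ‖z - z₀‖ := Complex.abs_re_le_norm _
      have h2 : ‖z - z₀‖ < ε := by
        rw [← Complex.dist_eq]; exact mem_ball.mp hzball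
      simpa [Complex.sub_re] using lt_of_le_of_lt h1 h2
    have hnorm : ‖Complex.exp (z * x) * x‖ = Real.exp (z.re * x) * |x| := by
      rw [norm_mul, Complex.norm_exp, Complex.norm_real, Real.norm_eq_abs]
      simp [Complex.mul_re]
    rw [hnorm, mul_comm]
    calc |x| * Real.exp (z.re * x)
        ≤ ε⁻¹ * (Real.exp ((z.re + ε) * x) + Real.exp ((z.re - ε) * x)) :=
          abs_mul_exp_le x hε
      _ ≤ bound x := by
          rw [hbdef]
          have b1 : Real.exp ((z.re + ε) * x) ≤
              Real.exp ((t₀ - 2 * ε) * x) + Real.exp ((t₀ + 2 * ε) * x) := by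
            apply exp_mul_le_add x <;> [skip; skip] <;>
              · have := abs_lt.mp hre; linarith
          have b2 : Real.exp ((z.re - ε) * x) ≤
              Real.exp ((t₀ - 2 * ε) * x) + Real.exp ((t₀ + 2 * ε) * x) := by
            apply exp_mul_le_add x <;>
              · have := abs_lt.mp hre; linarith
          have : (0:ℝ) < ε⁻¹ := by positivity
          nlinarith [b1, b2]
  · exact ((hIa.add hIb).const_mul 2).const_mul ε⁻¹
  · filter_upwards with x z hzball
    have h1 : HasDerivAt (fun z : ℂ => z * (x:ℂ)) (x:ℂ) z := hasDerivAt_mul_const _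
    simpa using h1.cexp

lemma integral_cexp_strip_eq (ν₁ ν₂ : Measure ℝ) [IsFiniteMeasure ν₁] [IsFiniteMeasure ν₂]
    {δ : ℝ} (hδ : 0 < δ)
    (hI₁ : ∀ t ∈ Set.Ioo (-δ) δ, Integrable (fun x => Real.exp (t * x)) ν₁)
    (hI₂ : ∀ t ∈ Set.Ioo (-δ) δ, Integrable (fun x => Real.exp (t * x)) ν₂)
    (heq : ∀ t ∈ Set.Ioo (-δ) δ,
      ∫ x, Real.exp (t * x) ∂ν₁ = ∫ x, Real.exp (t * x) ∂ν₂)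
    {z : ℂ} (hz : z.re ∈ Set.Ioo (-δ) δ) :
    ∫ x, Complex.exp (z * x) ∂ν₁ = ∫ x, Complex.exp (z * x) ∂ν₂ := by
  set U : Set ℂ := Complex.re ⁻¹' Set.Ioo (-δ) δ with hU
  have hUopen : IsOpen U := isOpen_Ioo.preimage Complex.continuous_re
  have hUconv : Convex ℝ U := (convex_Ioo (-δ) δ).linear_preimage Complex.reLm
  have hUpre : IsPreconnected U := hUconv.isPreconnected
  have h0U : (0 : ℂ) ∈ U := by
    simp only [hU, Set.mem_preimage, Complex.zero_re]
    exact ⟨by linarith, hδ⟩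
  have hdf : DifferentiableOn ℂ (fun z => ∫ x, Complex.exp (z * x) ∂ν₁) U :=
    fun z hz => (differentiableAt_integral_cexp ν₁ hI₁ hz).differentiableWithinAt
  have hdg : DifferentiableOn ℂ (fun z => ∫ x, Complex.exp (z * x) ∂ν₂) U :=
    fun z hz => (differentiableAt_integral_cexp ν₂ hI₂ hz).differentiableWithinAt
  have hf := hdf.analyticOnNhd hUopen
  have hg := hdg.analyticOnNhd hUopen
  -- equality at real points
  have hreal : ∀ t : ℝ, t ∈ Set.Ioo (-δ) δ →
      (∫ x, Complex.exp ((t : ℂ) * x) ∂ν₁) = ∫ x, Complex.exp ((t : ℂ) * x) ∂ν₂ := by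
    intro t ht
    have e1 : ∀ (ν : Measure ℝ), ∫ x, Complex.exp ((t : ℂ) * x) ∂ν
        = ((∫ x, Real.exp (t * x) ∂ν : ℝ) : ℂ) := by
      intro ν
      rw [show (fun x : ℝ => Complex.exp ((t : ℂ) * x)) = fun x : ℝ => ((Real.exp (t * x) : ℝ) : ℂ) from funext fun x => by
        rw [← Complex.ofReal_mul, Complex.ofReal_exp]]
      exact integral_ofReal
    rw [e1, e1, heq t ht]
  -- frequently near 0
  have hseq : Tendsto (fun n : ℕ => ((δ / (n + 2) : ℝ) : ℂ)) atTop (𝓝[≠] (0 : ℂ)) := by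
    apply tendsto_nhdsWithin_of_tendsto_nhds_of_eventually_within
    · have h1 : Tendsto (fun n : ℕ => (δ / (n + 2) : ℝ)) atTop (𝓝 0) := by
        apply Tendsto.div_atTop (tendsto_const_nhds)
        exact tendsto_atTop_add_const_right _ 2 tendsto_natCast_atTop_atTop
      have h2 := (Complex.continuous_ofReal.tendsto 0).comp h1
      simpa using Tendsto.congr (fun n => by simp) h2
    · filter_upwards with n
      have hpos : (0:ℝ) < δ / (n + 2) := by positivity
      simp only [Set.mem_compl_iff, Set.mem_singleton_iff]
      exact_mod_cast ne_of_gt (by exact_mod_cast hpos)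
  have hmemIoo : ∀ n : ℕ, (δ / (n + 2) : ℝ) ∈ Set.Ioo (-δ) δ := by
    intro n
    constructor
    · have : (0:ℝ) < δ / (n + 2) := by positivity
      linarith
    · apply div_lt_self hδ
      have : (0:ℝ) ≤ (n:ℝ) := Nat.cast_nonneg n
      linarith
  have hfreq : ∃ᶠ w in 𝓝[≠] (0 : ℂ),
      (∫ x, Complex.exp (w * x) ∂ν₁) = ∫ x, Complex.exp (w * x) ∂ν₂ :=
    hseq.frequently (Frequently.of_forall fun n => hreal _ (hmemIoo n))
  exact hf.eqOn_of_preconnected_of_frequently_eq hg hUpre h0U hfreq hz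

open scoped ContDiff in
noncomputable def mkSchwartz (f : ℝ → ℂ) (h1 : ContDiff ℝ ∞ f) (h2 : HasCompactSupport f) :
    SchwartzMap ℝ ℂ where
  toFun := f
  smooth' := h1
  decay' := by
    intro k n
    have hc : Continuous fun x : ℝ => ‖x‖ ^ k * ‖iteratedFDeriv ℝ n f x‖ :=
      (continuous_norm.pow k).mul (h1.continuous_iteratedFDeriv (mod_cast le_top)).norm
    have hsupp : HasCompactSupport fun x : ℝ => ‖x‖ ^ k * ‖iteratedFDeriv ℝ n f x‖ :=
      ((h2.iteratedFDeriv n).norm).mul_left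
    obtain ⟨C, hC⟩ := hc.bounded_above_of_compact_support hsupp
    exact ⟨C, fun x => (le_abs_self _).trans ((Real.norm_eq_abs _) ▸ hC x)⟩

open scoped ContDiff in
lemma mkSchwartz_apply (f : ℝ → ℂ) (h1 : ContDiff ℝ ∞ f) (h2 : HasCompactSupport f) (x : ℝ) :
    mkSchwartz f h1 h2 x = f x := rfl

lemma norm_cexp_real_mul_I (r : ℝ) : ‖Complex.exp ((r : ℂ) * Complex.I)‖ = 1 := by
  rw [Complex.norm_exp]
  simp

lemma integral_schwartz_eq (ν₁ ν₂ : Measure ℝ) [IsFiniteMeasure ν₁] [IsFiniteMeasure ν₂]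
    (hchar : ∀ s : ℝ, ∫ x, Complex.exp ((s : ℂ) * Complex.I * x) ∂ν₁
      = ∫ x, Complex.exp ((s : ℂ) * Complex.I * x) ∂ν₂)
    (f : SchwartzMap ℝ ℂ) : ∫ x, f x ∂ν₁ = ∫ x, f x ∂ν₂ := by
  set g : ℝ → ℂ := 𝓕 ⇑f with hg
  have hgS : Integrable g volume ∧ Continuous g := by
    have h1 := (FourierTransform.fourierCLE ℂ (SchwartzMap ℝ ℂ) f).integrable (μ := volume)
    have h2 := (FourierTransform.fourierCLE ℂ (SchwartzMap ℝ ℂ) f).continuous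
    rw [FourierTransform.fourierCLE_apply, SchwartzMap.fourier_coe] at h1 h2
    exact ⟨h1, h2⟩
  have hinv : ∀ x : ℝ, f x = ∫ ξ : ℝ, Complex.exp ((2 * π * (ξ * x) : ℝ) * Complex.I) • g ξ := by
    intro x
    have h := f.continuous.fourierInv_fourier_eq f.integrable hgS.1
    have h2 : f x = 𝓕⁻ g x := (congrFun h x).symm
    rw [h2, Real.fourierInv_eq']
    refine integral_congr_ae (Eventually.of_forall fun ξ => ?_)
    beta_reduce
    congr 2
    rw [Real.inner_apply]
  have main : ∀ (ν : Measure ℝ), IsFiniteMeasure ν →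
      ∫ x, f x ∂ν = ∫ ξ, (∫ x, Complex.exp ((2 * π * ξ : ℝ) * Complex.I * x) ∂ν) • g ξ := by
    intro ν hν
    have hF : ∀ (x ξ : ℝ), Complex.exp ((2 * π * (ξ * x) : ℝ) * Complex.I)
        = Complex.exp ((2 * π * ξ : ℝ) * Complex.I * x) := by
      intro x ξ
      congr 1
      push_cast
      ring
    calc ∫ x, f x ∂ν
        = ∫ x, ∫ ξ, Complex.exp ((2 * π * ξ : ℝ) * Complex.I * x) • g ξ ∂volume ∂ν := by
          refine integral_congr_ae (Eventually.of_forall fun x => ?_)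
          rw [hinv x]
          simp only [hF]
      _ = ∫ ξ, ∫ x, Complex.exp ((2 * π * ξ : ℝ) * Complex.I * x) • g ξ ∂ν ∂volume := by
          apply integral_integral_swap
          have hcont : Continuous
              (fun p : ℝ × ℝ => Complex.exp ((2 * π * p.2 : ℝ) * Complex.I * p.1) • g p.2) := by
            apply Continuous.fun_smul
            · apply Complex.continuous_exp.comp
              continuity
            · exact hgS.2.comp continuous_snd
          refine (integrable_prod_iff hcont.aestronglyMeasurable).mpr ⟨?_, ?_⟩
          · refine Eventually.of_forall fun x => ?_
            apply Integrable.bdd_mul (c := 1) hgS.1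
            · apply Continuous.aestronglyMeasurable
              apply Complex.continuous_exp.comp
              continuity
            · refine Eventually.of_forall fun ξ => ?_
              have : ((2 * π * ξ : ℝ) : ℂ) * Complex.I * x = ((2 * π * ξ * x : ℝ) : ℂ) * Complex.I := by
                push_cast; ring
              rw [this, norm_cexp_real_mul_I]
          · have : (fun x : ℝ => ∫ ξ, ‖Complex.exp ((2 * π * ξ : ℝ) * Complex.I * x) • g ξ‖ ∂volume)
                = fun _ : ℝ => ∫ ξ, ‖g ξ‖ ∂volume := by
              funext x
              refine integral_congr_ae (Eventually.of_forall fun ξ => ?_)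
              beta_reduce
              rw [norm_smul]
              have : ((2 * π * ξ : ℝ) : ℂ) * Complex.I * x = ((2 * π * ξ * x : ℝ) : ℂ) * Complex.I := by
                push_cast; ring
              rw [this, norm_cexp_real_mul_I, one_mul]
            rw [this]
            exact integrable_const _
      _ = ∫ ξ, (∫ x, Complex.exp ((2 * π * ξ : ℝ) * Complex.I * x) ∂ν) • g ξ := by
          refine integral_congr_ae (Eventually.of_forall fun ξ => ?_)
          exact integral_smul_const _ _
  rw [main ν₁ inferInstance, main ν₂ inferInstance]
  refine integral_congr_ae (Eventually.of_forall fun ξ => ?_)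
  beta_reduce
  rw [hchar (2 * π * ξ)]

open scoped ContDiff in
lemma measure_Iic_eq (ν₁ ν₂ : Measure ℝ) [IsFiniteMeasure ν₁] [IsFiniteMeasure ν₂]
    (h : ∀ f : SchwartzMap ℝ ℂ, ∫ x, f x ∂ν₁ = ∫ x, f x ∂ν₂) (a : ℝ) :
    ν₁ (Set.Iic a) = ν₂ (Set.Iic a) := by
  -- the bump functions
  have hbump : ∀ n : ℕ, ∃ φ : ℝ → ℝ, ContDiff ℝ ∞ φ ∧ HasCompactSupport φ ∧
      (∀ x, 0 ≤ φ x) ∧ (∀ x, φ x ≤ 1) ∧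
      (∀ x, a - (n + 1) ≤ x → x ≤ a → φ x = 1) ∧
      (∀ x, a + 1 / (n + 1) ≤ x → φ x = 0) := by
    intro n
    set c : ℝ := a - ((n : ℝ) + 1) / 2 with hc
    have hn : (0:ℝ) < (n : ℝ) + 1 := by positivity
    set bump : ContDiffBump c :=
      ⟨((n : ℝ) + 1) / 2, ((n : ℝ) + 1) / 2 + 1 / ((n : ℝ) + 1), by positivity, by
        have : (0:ℝ) < 1 / ((n : ℝ) + 1) := by positivity
        linarith⟩ with hb
    refine ⟨⇑bump, ?_, bump.hasCompactSupport, fun x => bump.nonneg, fun x => bump.le_one,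
      ?_, ?_⟩
    · exact bump.contDiff
    · intro x h1 h2
      apply bump.one_of_mem_closedBall
      rw [Metric.mem_closedBall, Real.dist_eq, abs_le]
      constructor <;> [skip; skip] <;> simp only [hb] <;> rw [hc] at * <;> linarith
    · intro x hx
      apply bump.zero_of_le_dist
      rw [Real.dist_eq, abs_of_nonneg]
      · simp only [hb]
        rw [hc]
        have : a + 1/((n:ℝ)+1) ≤ x := hx
        linarith
      · rw [hc]
        have : a + 1/((n:ℝ)+1) ≤ x := hx
        have h0 : (0:ℝ) < 1 / ((n : ℝ) + 1) := by positivity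
        linarith
  choose φ hsm hcs hnn hle hone hzero using hbump
  -- complex Schwartz versions and equal integrals
  have hint : ∀ n : ℕ, ∫ x, φ n x ∂ν₁ = ∫ x, φ n x ∂ν₂ := by
    intro n
    have hsmC : ContDiff ℝ ∞ fun x : ℝ => ((φ n x : ℝ) : ℂ) :=
      Complex.ofRealCLM.contDiff.comp (hsm n)
    have hcsC : HasCompactSupport fun x : ℝ => ((φ n x : ℝ) : ℂ) :=
      (hcs n).comp_left (g := Complex.ofReal) Complex.ofReal_zero
    have key := h (mkSchwartz _ hsmC hcsC)
    have hre : ∀ (ν : Measure ℝ), ∫ x, (mkSchwartz _ hsmC hcsC) x ∂ν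
        = ((∫ x, φ n x ∂ν : ℝ) : ℂ) := by
      intro ν
      rw [show (fun x => (mkSchwartz _ hsmC hcsC) x) = fun x : ℝ => ((φ n x : ℝ) : ℂ) from
        funext fun x => mkSchwartz_apply _ hsmC hcsC x]
      exact integral_ofReal
    rw [hre ν₁, hre ν₂] at key
    exact_mod_cast key
  -- integrability
  have hinteg : ∀ (ν : Measure ℝ) (_ : IsFiniteMeasure ν) (n : ℕ), Integrable (φ n) ν := by
    intro ν hν n
    exact (hsm n).continuous.integrable_of_hasCompactSupport (hcs n)
  -- pointwise limit
  have hlim : ∀ x : ℝ, Tendsto (fun n : ℕ => φ n x) atTop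
      (𝓝 (Set.indicator (Set.Iic a) (fun _ => (1:ℝ)) x)) := by
    intro x
    rcases le_or_gt x a with hx | hx
    · have hval : Set.indicator (Set.Iic a) (fun _ => (1:ℝ)) x = 1 := by
        exact Set.indicator_of_mem (Set.mem_Iic.mpr hx) _
      rw [hval]
      apply tendsto_const_nhds.congr'
      filter_upwards [eventually_ge_atTop (⌈a - x⌉₊)] with n hn
      refine (hone n x ?_ hx).symm
      have h1 : a - x ≤ ⌈a - x⌉₊ := Nat.le_ceil _
      have h2 : (⌈a - x⌉₊ : ℝ) ≤ n := by exact_mod_cast hn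
      linarith
    · have hval : Set.indicator (Set.Iic a) (fun _ => (1:ℝ)) x = 0 := by
        rw [Set.indicator_of_notMem (by simpa using hx)]
      rw [hval]
      apply tendsto_const_nhds.congr'
      filter_upwards [eventually_ge_atTop (⌈1 / (x - a)⌉₊)] with n hn
      refine (hzero n x ?_).symm
      have hxa : (0:ℝ) < x - a := by linarith
      have h1 : 1 / (x - a) ≤ (⌈1 / (x - a)⌉₊ : ℝ) := Nat.le_ceil _
      have h2 : ((⌈1 / (x - a)⌉₊ : ℝ)) ≤ n := by exact_mod_cast hn
      have h3 : 1 / (x - a) ≤ (n : ℝ) + 1 := by linarith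
      have h4 : 1 / ((n:ℝ) + 1) ≤ x - a := by
        rw [div_le_iff₀ (by positivity)]
        rw [div_le_iff₀ hxa] at h3
        linarith
      linarith
  -- dominated convergence
  have hdc : ∀ (ν : Measure ℝ) (_ : IsFiniteMeasure ν),
      Tendsto (fun n : ℕ => ∫ x, φ n x ∂ν) atTop (𝓝 ((ν (Set.Iic a)).toReal)) := by
    intro ν hν
    have := MeasureTheory.tendsto_integral_of_dominated_convergence
      (F := fun n : ℕ => φ n) (f := Set.indicator (Set.Iic a) (fun _ => (1:ℝ)))
      (bound := fun _ => (1:ℝ)) (μ := ν)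
      (fun n => (hinteg ν hν n).1)
      (integrable_const 1)
      (fun n => Eventually.of_forall fun x => by
        rw [Real.norm_eq_abs, abs_of_nonneg (hnn n x)]; exact hle n x)
      (Eventually.of_forall hlim)
    have heqi : ∫ x, Set.indicator (Set.Iic a) (fun _ => (1:ℝ)) x ∂ν = (ν (Set.Iic a)).toReal := by
      rw [show (Set.indicator (Set.Iic a) (fun _ => (1:ℝ))) = (Set.Iic a).indicator 1 from rfl]
      exact integral_indicator_one measurableSet_Iic
    rw [heqi] at this
    exact this
  have h1 := hdc ν₁ inferInstance
  have h2 := hdc ν₂ inferInstance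
  rw [show (fun n : ℕ => ∫ x, φ n x ∂ν₁) = fun n : ℕ => ∫ x, φ n x ∂ν₂ from funext hint] at h1
  have := tendsto_nhds_unique h1 h2
  exact (ENNReal.toReal_eq_toReal_iff' (measure_ne_top ν₁ _) (measure_ne_top ν₂ _)).mp this

/-- If the moment generating functions of two real random variables `A` and `B` exist
(are finite) and coincide on an open interval containing `0`, then `A` and `B` are equal
in distribution. -/
theorem eq_in_distribution_of_mgf_eq {Ω : Type*} [MeasurableSpace Ω]
    (μ : Measure Ω) [IsProbabilityMeasure μ] (A B : Ω → ℝ)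
    (hA : Measurable A) (hB : Measurable B) (δ : ℝ) (hδ : 0 < δ)
    (hIA : ∀ t ∈ Set.Ioo (-δ) δ, Integrable (fun ω => Real.exp (t * A ω)) μ)
    (hIB : ∀ t ∈ Set.Ioo (-δ) δ, Integrable (fun ω => Real.exp (t * B ω)) μ)
    (heq : ∀ t ∈ Set.Ioo (-δ) δ, mgf A μ t = mgf B μ t) :
    μ.map A = μ.map B := by
  have i1 : IsProbabilityMeasure (μ.map A) := Measure.isProbabilityMeasure_map hA.aemeasurable
  have i2 : IsProbabilityMeasure (μ.map B) := Measure.isProbabilityMeasure_map hB.aemeasurable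
  have hexp : ∀ t : ℝ, AEStronglyMeasurable (fun x : ℝ => Real.exp (t * x)) (μ.map A) ∧
      AEStronglyMeasurable (fun x : ℝ => Real.exp (t * x)) (μ.map B) := by
    intro t
    constructor <;>
      exact (Real.continuous_exp.comp (continuous_const.mul continuous_id)).aestronglyMeasurable
  have hIA' : ∀ t ∈ Set.Ioo (-δ) δ, Integrable (fun x => Real.exp (t * x)) (μ.map A) := by
    intro t ht
    rw [integrable_map_measure (hexp t).1 hA.aemeasurable]
    simpa [Function.comp_def] using hIA t ht
  have hIB' : ∀ t ∈ Set.Ioo (-δ) δ, Integrable (fun x => Real.exp (t * x)) (μ.map B) := by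
    intro t ht
    rw [integrable_map_measure (hexp t).2 hB.aemeasurable]
    simpa [Function.comp_def] using hIB t ht
  have heq' : ∀ t ∈ Set.Ioo (-δ) δ,
      ∫ x, Real.exp (t * x) ∂(μ.map A) = ∫ x, Real.exp (t * x) ∂(μ.map B) := by
    intro t ht
    rw [integral_map hA.aemeasurable (hexp t).1, integral_map hB.aemeasurable (hexp t).2]
    exact heq t ht
  have hchar : ∀ s : ℝ, ∫ x, Complex.exp ((s : ℂ) * Complex.I * x) ∂(μ.map A)
      = ∫ x, Complex.exp ((s : ℂ) * Complex.I * x) ∂(μ.map B) := by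
    intro s
    have hz : ((s : ℂ) * Complex.I).re ∈ Set.Ioo (-δ) δ := by
      simp only [Complex.mul_re, Complex.ofReal_re, Complex.I_re, Complex.ofReal_im,
        Complex.I_im, mul_zero, mul_one, zero_sub, Set.mem_Ioo]
      constructor <;> simp <;> linarith
    have := integral_cexp_strip_eq (μ.map A) (μ.map B) hδ hIA' hIB' heq' hz
    simpa [mul_assoc] using this
  have hs := integral_schwartz_eq (μ.map A) (μ.map B) hchar
  exact MeasureTheory.Measure.ext_of_Iic (μ.map A) (μ.map B) (measure_Iic_eq (μ.map A) (μ.map B) hs)
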